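/- arXiv:1908.10438 — 7 statements merged into one kernel-verified Lean document; each statement's English description precedes it below -/
import Mathlib

section
/- Let f be a nonnegative, nondecreasing cost function on the positive integers, let C > 0, and let H ≥ 1 satisfy f(H) ≤ λ ≤ f(H+1), where λ := (Σ_{j=1}^{H} f(j) + C)/H. Define S : ℤ⁺ → ℝ by S(h) = Σ_{j=h}^{H} f(j) + C − (H − h + 1)·λ for 1 ≤ h ≤ H, and S(h) = f(h) + C − λ for h ≥ H. Then: (i) S(1) = 0; (ii) S is nondecreasing; (iii) S satisfies the average-cost Bellman equation S(h) = f(h) − λ + min{C, S(h+1)} for every h ≥ 1; and (iv) the minimum in (iii) is attained by C for h ≥ H (i.e., S(h+1) ≥ C for h ≥ H) and by S(h+1) for h < H (i.e., S(h+1) ≤ C for h < H). Hence the stationary threshold policy that activates exactly in states h ≥ H solves the Bellman optimality equation of the decoupled problem with optimal average cost λ. -/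
/-- For the reliable-channel decoupled problem, if `H ≥ 1` satisfies
`f(H) ≤ λ ≤ f(H+1)` with `λ = (Σ_{j=1}^H f(j) + C)/H`, then the differential
cost-to-go function `S` (as defined) satisfies `S 1 = 0`, is nondecreasing, solves the
average-cost Bellman equation `S h = f h − λ + min {C, S (h+1)}`, and the minimum is
attained by `C` for `h ≥ H` and by `S (h+1)` for `h < H`. -/
theorem stmt3 (f : ℕ → ℝ) (C : ℝ) (hC : 0 < C)
    (hpos : ∀ h, 1 ≤ h → 0 ≤ f h)
    (hmono : ∀ h, 1 ≤ h → f h ≤ f (h + 1))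
    (H : ℕ) (hH : 1 ≤ H)
    (lam : ℝ) (hlam : lam = ((∑ j ∈ Finset.Icc 1 H, f j) + C) / H)
    (hth1 : f H ≤ lam) (hth2 : lam ≤ f (H + 1))
    (S : ℕ → ℝ)
    (hSlow : ∀ h, 1 ≤ h → h ≤ H →
      S h = (∑ j ∈ Finset.Icc h H, f j) + C - ((H : ℝ) - h + 1) * lam)
    (hShigh : ∀ h, H ≤ h → S h = f h + C - lam) :
    S 1 = 0 ∧
    (∀ h, 1 ≤ h → S h ≤ S (h + 1)) ∧
    (∀ h, 1 ≤ h → S h = f h - lam + min C (S (h + 1))) ∧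
    (∀ h, H ≤ h → C ≤ S (h + 1)) ∧
    (∀ h, 1 ≤ h → h < H → S (h + 1) ≤ C) := by
  -- monotonicity of f on [1, ∞)
  have fmono : ∀ a b, 1 ≤ a → a ≤ b → f a ≤ f b := by
    intro a b ha hab
    induction b, hab using Nat.le_induction with
    | base => exact le_rfl
    | succ n hn ih => exact ih.trans (hmono n (ha.trans hn))
  have hH0 : (H : ℝ) ≠ 0 := by
    have : (0:ℝ) < H := by exact_mod_cast hH
    linarith
  -- sum split
  have hsplit : ∀ h, h ≤ H →
      ∑ j ∈ Finset.Icc h H, f j = f h + ∑ j ∈ Finset.Icc (h+1) H, f j := by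
    intro h hh
    rw [Finset.Icc_add_one_left_eq_Ioc, Finset.Icc_eq_cons_Ioc hh, Finset.sum_cons]
  -- S 1 = 0
  have hS1 : S 1 = 0 := by
    rw [hSlow 1 le_rfl hH, hlam]
    push_cast
    field_simp
    ring
  -- recurrence below H
  have hA : ∀ h, 1 ≤ h → h < H → S (h + 1) = S h + lam - f h := by
    intro h h1 hh
    rw [hSlow (h+1) (by omega) (by omega), hSlow h h1 (by omega), hsplit h (by omega)]
    push_cast
    ring
  -- C ≤ S (h+1) for h ≥ H
  have hB : ∀ h, H ≤ h → C ≤ S (h + 1) := by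
    intro h hh
    rw [hShigh (h+1) (by omega)]
    have := fmono (H+1) (h+1) (by omega) (by omega)
    linarith
  -- S (h+1) ≤ C for 1 ≤ h < H
  have hCle : ∀ h, 1 ≤ h → h < H → S (h + 1) ≤ C := by
    intro h h1 hh
    rw [hSlow (h+1) (by omega) (by omega)]
    have hbound : ∑ j ∈ Finset.Icc (h+1) H, f j ≤ (Finset.Icc (h+1) H).card • lam := by
      apply Finset.sum_le_card_nsmul
      intro j hj
      simp only [Finset.mem_Icc] at hj
      exact (fmono j H (by omega) hj.2).trans hth1
    rw [Nat.card_Icc] at hbound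
    have hcast : ((H + 1 - (h + 1) : ℕ) : ℝ) = (H : ℝ) - h := by
      have : H + 1 - (h + 1) = H - h := by omega
      rw [this]
      push_cast [Nat.cast_sub (by omega : h ≤ H)]
      ring
    rw [nsmul_eq_mul, hcast] at hbound
    push_cast
    linarith
  refine ⟨hS1, ?_, ?_, hB, hCle⟩
  · intro h h1
    rcases lt_or_ge h H with hh | hh
    · have := hA h h1 hh
      have hf : f h ≤ lam := (fmono h H h1 (by omega)).trans hth1
      linarith
    · rw [hShigh h hh, hShigh (h+1) (by omega)]
      have := hmono h h1
      linarith
  · intro h h1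
    rcases lt_or_ge h H with hh | hh
    · rw [min_eq_right (hCle h h1 hh), hA h h1 hh]
      ring
    · rw [min_eq_left (hB h hh), hShigh h hh]
      ring
end

section
/- Let f be a nonnegative, nondecreasing cost function on the positive integers and let C > 0. Suppose that h·f(h) − Σ_{j=1}^{h} f(j) < C for every h ≥ 1. Then: (i) f is bounded, so λ := lim_{h→∞} f(h) = sup_h f(h) exists and is finite; (ii) Σ_{j=1}^{∞} (λ − f(j)) ≤ C (in particular this series of nonnegative terms converges); and (iii) the function S(h) := C − Σ_{j=h}^{∞} (λ − f(j)) satisfies S(h) = f(h) − λ + S(h+1) and S(h) ≤ C for every h ≥ 1, so S solves the Bellman equation S(h) = f(h) − λ + min{C, S(h+1)} with the minimum always attained by S(h+1), i.e., the never-activate policy is optimal with average cost λ. -/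
/-- If `h·f(h) − Σ_{j=1}^h f(j) < C` for all `h ≥ 1`, then `f` converges to
a finite limit `λ = sup f`, the series `Σ_{j=1}^∞ (λ − f(j))` converges with sum `≤ C`,
and `S(h) = C − Σ_{j=h}^∞ (λ − f(j))` satisfies `S(h) = f(h) − λ + S(h+1)` and
`S(h) ≤ C`, hence solves the Bellman equation `S h = f h − λ + min {C, S (h+1)}` with the
minimum always attained by `S(h+1)` (never-activate is optimal with average cost λ). -/
theorem stmt4 (f : ℕ → ℝ) (C : ℝ) (hC : 0 < C)
    (hpos : ∀ h, 1 ≤ h → 0 ≤ f h)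
    (hmono : ∀ h, 1 ≤ h → f h ≤ f (h + 1))
    (hlt : ∀ h : ℕ, 1 ≤ h → (h : ℝ) * f h - ∑ j ∈ Finset.Icc 1 h, f j < C) :
    ∃ lam : ℝ,
      Filter.Tendsto (fun h => f h) Filter.atTop (nhds lam) ∧
      (∀ h, 1 ≤ h → f h ≤ lam) ∧
      Summable (fun j : ℕ => lam - f (j + 1)) ∧
      (∑' j : ℕ, (lam - f (j + 1))) ≤ C ∧
      (∀ h, 1 ≤ h →
        (C - ∑' j : ℕ, (lam - f (h + j))) =
          f h - lam + (C - ∑' j : ℕ, (lam - f (h + 1 + j))) ∧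
        (C - ∑' j : ℕ, (lam - f (h + j))) ≤ C ∧
        (C - ∑' j : ℕ, (lam - f (h + j))) =
          f h - lam + min C (C - ∑' j : ℕ, (lam - f (h + 1 + j)))) := by
  -- monotonicity on [1, ∞)
  have hmono' : ∀ a b : ℕ, 1 ≤ a → a ≤ b → f a ≤ f b := by
    intro a b ha hab
    induction b with
    | zero => omega
    | succ n ih =>
      rcases Nat.lt_or_ge a (n + 1) with h | h
      · exact (ih (by omega)).trans (hmono n (by omega))
      · have : a = n + 1 := by omega
        simp [this]
  -- rewrite h * f h - Σ as a sum of differences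
  have hsumeq : ∀ h : ℕ, 1 ≤ h →
      (h : ℝ) * f h - ∑ j ∈ Finset.Icc 1 h, f j
        = ∑ j ∈ Finset.Icc 1 h, (f h - f j) := by
    intro h hh
    rw [Finset.sum_sub_distrib, Finset.sum_const, Nat.card_Icc]
    simp [nsmul_eq_mul]
  -- boundedness
  have hbdd : ∀ h : ℕ, 1 ≤ h → f h ≤ C + f 1 := by
    intro h hh
    have h1 := hlt h hh
    rw [hsumeq h hh] at h1
    have key : f h - f 1 ≤ ∑ j ∈ Finset.Icc 1 h, (f h - f j) := by
      have := Finset.single_le_sum (f := fun j => f h - f j)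
        (fun i hi => by
          rw [Finset.mem_Icc] at hi
          exact sub_nonneg.2 (hmono' i h hi.1 hi.2))
        (show 1 ∈ Finset.Icc 1 h by simp [hh])
      simpa using this
    linarith
  set lam : ℝ := ⨆ n : ℕ, f (n + 1) with hlam
  have hBdd : BddAbove (Set.range fun n : ℕ => f (n + 1)) := by
    refine ⟨C + f 1, ?_⟩
    rintro x ⟨n, rfl⟩
    exact hbdd (n + 1) (by omega)
  have hgmono : Monotone fun n : ℕ => f (n + 1) :=
    monotone_nat_of_le_succ fun n => hmono (n + 1) (by omega)
  have hle : ∀ h : ℕ, 1 ≤ h → f h ≤ lam := by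
    intro h hh
    have := le_ciSup hBdd (h - 1)
    simpa [Nat.sub_add_cancel hh] using this
  have htendg : Filter.Tendsto (fun n : ℕ => f (n + 1)) Filter.atTop (nhds lam) :=
    tendsto_atTop_ciSup hgmono hBdd
  have htend : Filter.Tendsto f Filter.atTop (nhds lam) :=
    (Filter.tendsto_add_atTop_iff_nat 1).mp htendg
  -- partial sums bounded by C
  have hpartial : ∀ n : ℕ, ∑ j ∈ Finset.range n, (lam - f (j + 1)) ≤ C := by
    intro n
    have htendsum : Filter.Tendsto
        (fun H : ℕ => ∑ j ∈ Finset.range n, (f (H + 1) - f (j + 1)))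
        Filter.atTop (nhds (∑ j ∈ Finset.range n, (lam - f (j + 1)))) := by
      exact tendsto_finset_sum _ fun j _ => htendg.sub tendsto_const_nhds
    refine le_of_tendsto htendsum ?_
    filter_upwards [Filter.eventually_ge_atTop n] with H hH
    have h1 : ∑ j ∈ Finset.range n, (f (H + 1) - f (j + 1))
        = ∑ j ∈ Finset.Icc 1 n, (f (H + 1) - f j) := by
      rw [show Finset.Icc 1 n = Finset.Ico 1 (n + 1) from by rw [Finset.Ico_add_one_right_eq_Icc],
        Finset.sum_Ico_eq_sum_range]
      simp [add_comm]
    have h2 : ∑ j ∈ Finset.Icc 1 n, (f (H + 1) - f j)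
        ≤ ∑ j ∈ Finset.Icc 1 (H + 1), (f (H + 1) - f j) := by
      refine Finset.sum_le_sum_of_subset_of_nonneg ?_ ?_
      · exact Finset.Icc_subset_Icc_right (by omega)
      · intro i hi _
        rw [Finset.mem_Icc] at hi
        exact sub_nonneg.2 (hmono' i (H + 1) hi.1 hi.2)
    have h3 := hlt (H + 1) (by omega)
    rw [hsumeq (H + 1) (by omega)] at h3
    rw [h1]
    exact h2.trans (le_of_lt h3)
  have hnn : ∀ j : ℕ, 0 ≤ lam - f (j + 1) :=
    fun j => sub_nonneg.2 (hle (j + 1) (by omega))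
  have hsummable : Summable fun j : ℕ => lam - f (j + 1) :=
    summable_of_sum_range_le hnn hpartial
  have htsumle : (∑' j : ℕ, (lam - f (j + 1))) ≤ C :=
    Summable.tsum_le_of_sum_range_le hsummable hpartial
  -- summability of shifted tails
  have hshift : ∀ h : ℕ, 1 ≤ h → Summable fun j : ℕ => lam - f (h + j) := by
    intro h hh
    have := (summable_nat_add_iff (h - 1)).2 hsummable
    refine this.congr fun j => ?_
    have e : j + (h - 1) + 1 = h + j := by omega
    rw [e]
  refine ⟨lam, htend, hle, hsummable, htsumle, ?_⟩
  intro h hh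
  have hsum_h := hshift h hh
  have hsum_h1 := hshift (h + 1) (by omega)
  have hrec : (∑' j : ℕ, (lam - f (h + j)))
      = (lam - f h) + ∑' j : ℕ, (lam - f (h + 1 + j)) := by
    rw [Summable.tsum_eq_zero_add hsum_h]
    simp only [Nat.add_zero]
    congr 1
    exact tsum_congr fun j => by
      have e : h + (j + 1) = h + 1 + j := by omega
      rw [e]
  have hnn_h : 0 ≤ ∑' j : ℕ, (lam - f (h + j)) :=
    tsum_nonneg fun j => sub_nonneg.2 (hle (h + j) (by omega))
  have hnn_h1 : 0 ≤ ∑' j : ℕ, (lam - f (h + 1 + j)) :=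
    tsum_nonneg fun j => sub_nonneg.2 (hle (h + 1 + j) (by omega))
  refine ⟨by rw [hrec]; ring, by linarith, ?_⟩
  rw [min_eq_right (by linarith), hrec]; ring
end

section
/- Let F_1, F_2 : ℤ⁺ → ℝ be nondecreasing with F_1(1) ≥ F_2(1), let π(a, b) = 1 if F_1(a) ≥ F_2(b) and π(a, b) = 2 otherwise, and let T : (ℤ⁺)² → (ℤ⁺)² be the reliable-channel closed-loop dynamics T(a, b) = (1, b+1) if π(a, b) = 1 and T(a, b) = (a+1, 1) if π(a, b) = 2. Suppose k is the least positive integer with F_2(k) > F_1(1) (necessarily k ≥ 2). Then the orbit of the state (1, 2) under T is periodic with period k: T^k(1, 2) = (1, 2), and the cycle consists of scheduling source 1 for k − 1 consecutive slots followed by source 2 once. Hence every two-source index policy induces a cyclic schedule of this form. -/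
/-- For the two-source index policy with nondecreasing index functions
`F₁, F₂` (on the positive integers), `F₁ 1 ≥ F₂ 1`, and reliable-channel closed-loop
dynamics `T`, if `k` is the least positive integer with `F₂ k > F₁ 1` then `k ≥ 2`, the
orbit of `(1,2)` is periodic with period `k` (`T^[k] (1,2) = (1,2)`), and along the
cycle source 1 is scheduled in every slot except slot `k−2`, where source 2 is scheduled
(source 1 for `k−1` slots, source 2 once). Source 1 is scheduled in state `(a,b)` iff
`F₂ b ≤ F₁ a`. -/
theorem stmt9 (F₁ F₂ : ℕ → ℝ)
    (h₁ : ∀ n, 1 ≤ n → F₁ n ≤ F₁ (n + 1))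
    (h₂ : ∀ n, 1 ≤ n → F₂ n ≤ F₂ (n + 1))
    (hinit : F₂ 1 ≤ F₁ 1)
    (T : ℕ × ℕ → ℕ × ℕ)
    (hT : ∀ s : ℕ × ℕ, T s = if F₂ s.2 ≤ F₁ s.1 then (1, s.2 + 1) else (s.1 + 1, 1))
    (k : ℕ) (hk1 : 1 ≤ k) (hk2 : F₁ 1 < F₂ k)
    (hkmin : ∀ m, 1 ≤ m → F₁ 1 < F₂ m → k ≤ m) :
    2 ≤ k ∧
    T^[k] (1, 2) = (1, 2) ∧
    (∀ t, t < k → t ≠ k - 2 →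
      F₂ (T^[t] (1, 2)).2 ≤ F₁ (T^[t] (1, 2)).1) ∧
    ¬ F₂ (T^[k - 2] (1, 2)).2 ≤ F₁ (T^[k - 2] (1, 2)).1 := by
  have hkge2 : 2 ≤ k := by
    by_contra h
    interval_cases k
    exact absurd hinit (not_le.2 hk2)
  -- indices below k have small F₂
  have hle : ∀ b, 1 ≤ b → b < k → F₂ b ≤ F₁ 1 := by
    intro b hb hbk
    by_contra h
    exact absurd (hkmin b hb (not_le.1 h)) (not_le.2 hbk)
  -- orbit up to k-2
  have horb : ∀ t, t ≤ k - 2 → T^[t] (1, 2) = (1, t + 2) := by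
    intro t ht
    induction t with
    | zero => simp
    | succ n ih =>
      have hn : n ≤ k - 2 := by omega
      rw [Function.iterate_succ_apply', ih hn, hT]
      have : F₂ (n + 2) ≤ F₁ 1 := hle (n + 2) (by omega) (by omega)
      simp [this]
  have hstep : T^[k - 1] (1, 2) = (2, 1) := by
    have : k - 1 = (k - 2) + 1 := by omega
    rw [this, Function.iterate_succ_apply', horb (k - 2) le_rfl, hT]
    have hkk : k - 2 + 2 = k := by omega
    rw [hkk]
    simp [not_le.2 hk2]
  have hfull : T^[k] (1, 2) = (1, 2) := by
    have : k = (k - 1) + 1 := by omega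
    rw [this, Function.iterate_succ_apply', hstep, hT]
    have : F₂ 1 ≤ F₁ 2 := le_trans hinit (h₁ 1 le_rfl)
    simp [this]
  have hk2state : T^[k - 2] (1, 2) = (1, k) := by
    rw [horb (k - 2) le_rfl]
    congr 1
    omega
  refine ⟨hkge2, hfull, ?_, ?_⟩
  · intro t htk htne
    rcases lt_or_ge t (k - 2) with h | h
    · rw [horb t (by omega)]
      exact hle (t + 2) (by omega) (by omega)
    · have : t = k - 1 := by omega
      rw [this, hstep]
      exact le_trans hinit (h₁ 1 le_rfl)
  · rw [hk2state]
    exact not_le.2 hk2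
end

section
/- Let f_1, f_2 : ℤ⁺ → ℝ and for each integer m ≥ 1 let C(m) := (m·f_1(1) + f_1(2) + Σ_{j=1}^{m+1} f_2(j)) / (m + 1) be the average cost of the cyclic schedule that serves source 1 in m consecutive slots and then source 2 once. Then for every k ≥ 1: C(k) ≤ C(k+1) if and only if W_1(1) ≤ W_2(k+1), and C(k) < C(k+1) if and only if W_1(1) < W_2(k+1), where W_i(h) := h·f_i(h+1) − Σ_{j=1}^{h} f_i(j) is the Whittle index of source i. In particular, comparing consecutive cycle lengths is equivalent to the Whittle index comparison, which yields the optimality of the Whittle index policy for two sources with reliable channels. -/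
/-- For two sources with reliable channels, letting `C m` be the average
cost of the cyclic schedule serving source 1 for `m` slots then source 2 once, and
`W_i h = h·f_i(h+1) − Σ_{j=1}^h f_i(j)` the Whittle indices, for every `k ≥ 1`:
`C k ≤ C (k+1)` iff `W₁ 1 ≤ W₂ (k+1)`, and `C k < C (k+1)` iff `W₁ 1 < W₂ (k+1)`. -/
theorem stmt10 (f₁ f₂ : ℕ → ℝ)
    (C : ℕ → ℝ)
    (hC : ∀ m, 1 ≤ m → C m =
      ((m : ℝ) * f₁ 1 + f₁ 2 + ∑ j ∈ Finset.Icc 1 (m + 1), f₂ j) / ((m : ℝ) + 1))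
    (W₁ W₂ : ℕ → ℝ)
    (hW₁ : ∀ h, W₁ h = (h : ℝ) * f₁ (h + 1) - ∑ j ∈ Finset.Icc 1 h, f₁ j)
    (hW₂ : ∀ h, W₂ h = (h : ℝ) * f₂ (h + 1) - ∑ j ∈ Finset.Icc 1 h, f₂ j) :
    ∀ k, 1 ≤ k →
      (C k ≤ C (k + 1) ↔ W₁ 1 ≤ W₂ (k + 1)) ∧
      (C k < C (k + 1) ↔ W₁ 1 < W₂ (k + 1)) := by
  intro k hk
  have h1 : (1:ℝ) ≤ (k:ℝ) := by exact_mod_cast hk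
  have hne1 : ((k:ℝ) + 1) ≠ 0 := by nlinarith
  have hne2 : ((k:ℝ) + 2) ≠ 0 := by nlinarith
  have hpos : (0:ℝ) < ((k:ℝ) + 1) * ((k:ℝ) + 2) := by nlinarith
  have hsum2 : ∑ j ∈ Finset.Icc 1 (k + 1 + 1), f₂ j =
      (∑ j ∈ Finset.Icc 1 (k + 1), f₂ j) + f₂ (k + 2) := by
    rw [Finset.sum_Icc_succ_top (by omega)]
  have hsum1 : ∑ j ∈ Finset.Icc 1 1, f₁ j = f₁ 1 := by simp
  have key : C (k + 1) - C k =
      (W₂ (k + 1) - W₁ 1) / (((k:ℝ) + 1) * ((k:ℝ) + 2)) := by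
    rw [hC k hk, hC (k + 1) (by omega), hW₁ 1, hW₂ (k + 1), hsum2, hsum1]
    push_cast
    field_simp
    ring
  constructor
  · rw [← sub_nonneg, key, ← sub_nonneg (b := W₁ 1), le_div_iff₀ hpos, zero_mul]
  · rw [← sub_pos, key, ← sub_pos (b := W₁ 1), lt_div_iff₀ hpos, zero_mul]
end

section
/- Let 0 < p < 1 and let f : ℤ⁺ → ℝ be a nonnegative, nondecreasing cost function with Σ_{h=1}^{∞} f(h)(1−p)^h < ∞. Define W_p(h) := p²(h−1)·Σ_{k=h}^{∞} f(k)(1−p)^{k−h} − p·Σ_{j=1}^{h−1} f(j) for h ≥ 1, so that W_p(1) = 0 and W_p is nondecreasing. For each activation charge C > 0 such that W_p(h) ≥ C for some h, define H(C) to be the least positive integer H with W_p(H+1) ≥ C. Then: (i) W_p(H(C)) ≤ C ≤ W_p(H(C)+1), so H(C) satisfies the unreliable-channel threshold optimality condition; and (ii) H is nondecreasing in C: if 0 < C₁ ≤ C₂ and both H(C₁) and H(C₂) are defined, then H(C₁) ≤ H(C₂). Consequently the set of states {h : h ≥ H(C)} in which activation is optimal decreases monotonically as C increases (indexability of the decoupled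 problem with unreliable channel). -/
set_option maxHeartbeats 800000


/-- Indexability for the unreliable channel. With
`W_p h = p²(h−1)·Σ_{k=h}^∞ f(k)(1−p)^{k−h} − p·Σ_{j=1}^{h−1} f(j)`, we have `W_p 1 = 0`,
`W_p` is nondecreasing, and whenever `H(C)` is the least positive integer `H` with
`W_p (H+1) ≥ C` (for `C > 0` such that it is defined), `W_p (H(C)) ≤ C ≤ W_p (H(C)+1)`
and `H(C)` is nondecreasing in `C`. -/
theorem stmt17 (p : ℝ) (hp0 : 0 < p) (hp1 : p < 1)
    (f : ℕ → ℝ)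
    (hpos : ∀ h, 1 ≤ h → 0 ≤ f h)
    (hmono : ∀ h, 1 ≤ h → f h ≤ f (h + 1))
    (hbc : Summable (fun h : ℕ => f (h + 1) * (1 - p) ^ (h + 1)))
    (Wp : ℕ → ℝ)
    (hWp : ∀ h, 1 ≤ h →
      Wp h = p ^ 2 * ((h : ℝ) - 1) * (∑' k : ℕ, f (h + k) * (1 - p) ^ k)
        - p * ∑ j ∈ Finset.Icc 1 (h - 1), f j) :
    Wp 1 = 0 ∧
    (∀ h, 1 ≤ h → Wp h ≤ Wp (h + 1)) ∧
    (∀ C : ℝ, 0 < C → (∃ h, 1 ≤ h ∧ C ≤ Wp h) → ∀ H : ℕ,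
      IsLeast {H' : ℕ | 1 ≤ H' ∧ C ≤ Wp (H' + 1)} H →
      Wp H ≤ C ∧ C ≤ Wp (H + 1)) ∧
    (∀ C₁ C₂ : ℝ, ∀ H₁ H₂ : ℕ, 0 < C₁ → C₁ ≤ C₂ →
      IsLeast {H' : ℕ | 1 ≤ H' ∧ C₁ ≤ Wp (H' + 1)} H₁ →
      IsLeast {H' : ℕ | 1 ≤ H' ∧ C₂ ≤ Wp (H' + 1)} H₂ →
      H₁ ≤ H₂) := by
  have hq0 : (0:ℝ) ≤ 1 - p := by linarith
  have hq1 : (1:ℝ) - p < 1 := by linarith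
  have hqne : (1:ℝ) - p ≠ 0 := ne_of_gt (by linarith)
  -- f monotone on [1, ∞)
  have fmono : ∀ a b, 1 ≤ a → a ≤ b → f a ≤ f b := by
    intro a b ha hab
    induction b with
    | zero => omega
    | succ n ih =>
      rcases Nat.lt_or_ge a (n+1) with h | h
      · have h1 : a ≤ n := by omega
        have := hmono n (by omega)
        exact le_trans (ih h1) this
      · have : a = n + 1 := by omega
        subst this; rfl
  -- summability of the tails
  have hsum : ∀ h : ℕ, 1 ≤ h → Summable (fun k : ℕ => f (h + k) * (1 - p) ^ k) := by
    intro h hh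
    have h1 : Summable (fun n : ℕ => f (n + (h-1) + 1) * (1 - p) ^ (n + (h-1) + 1)) :=
      (summable_nat_add_iff (f := fun m : ℕ => f (m + 1) * (1 - p) ^ (m + 1)) (h-1)).mpr hbc
    have h2 := h1.mul_right (((1 - p) ^ h)⁻¹)
    refine h2.congr ?_
    intro n
    have he : n + (h-1) + 1 = n + h := by omega
    have hne : (1 - p) ^ h ≠ 0 := pow_ne_zero h hqne
    rw [he, Nat.add_comm h n, pow_add]
    field_simp
  -- recurrence for the tail sums
  have hrec : ∀ h : ℕ, 1 ≤ h →
      (∑' k : ℕ, f (h + k) * (1 - p) ^ k)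
        = f h + (1 - p) * ∑' k : ℕ, f (h + 1 + k) * (1 - p) ^ k := by
    intro h hh
    rw [Summable.tsum_eq_zero_add (hsum h hh)]
    simp only [pow_zero, mul_one, Nat.add_zero]
    congr 1
    have : ∀ k : ℕ, f (h + (k + 1)) * (1 - p) ^ (k + 1)
        = (f (h + 1 + k) * (1 - p) ^ k) * (1 - p) := by
      intro k
      have : h + (k + 1) = h + 1 + k := by omega
      rw [this, pow_succ]; ring
    rw [tsum_congr this, tsum_mul_right]
    ring
  -- key inequality : f h ≤ p * tail sum from h+1
  have hge : ∀ h : ℕ, 1 ≤ h → f h ≤ p * ∑' k : ℕ, f (h + 1 + k) * (1 - p) ^ k := by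
    intro h hh
    have hg : Summable (fun k : ℕ => f h * (1 - p) ^ k) :=
      (summable_geometric_of_lt_one hq0 hq1).mul_left (f h)
    have hle : (∑' k : ℕ, f h * (1 - p) ^ k)
        ≤ ∑' k : ℕ, f (h + 1 + k) * (1 - p) ^ k := by
      refine Summable.tsum_le_tsum ?_ hg (hsum (h+1) (by omega))
      intro k
      have : f h ≤ f (h + 1 + k) := fmono h (h+1+k) hh (by omega)
      have hp' : (0:ℝ) ≤ (1-p)^k := pow_nonneg hq0 k
      exact mul_le_mul_of_nonneg_right this hp'
    have hgeo : (∑' k : ℕ, f h * (1 - p) ^ k) = f h * (1 - (1-p))⁻¹ := by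
      rw [tsum_mul_left, tsum_geometric_of_lt_one hq0 hq1]
    have hval : (1:ℝ) - (1-p) = p := by ring
    rw [hgeo, hval] at hle
    have := mul_le_mul_of_nonneg_left hle (le_of_lt hp0)
    calc f h = p * (f h * p⁻¹) := by field_simp
    _ ≤ p * ∑' k : ℕ, f (h + 1 + k) * (1 - p) ^ k := this
  -- Wp 1 = 0
  have hW1 : Wp 1 = 0 := by
    rw [hWp 1 le_rfl]; norm_num
  -- monotonicity of Wp
  have hWmono : ∀ h, 1 ≤ h → Wp h ≤ Wp (h + 1) := by
    intro h hh
    obtain ⟨m, rfl⟩ : ∃ m, h = m + 1 := ⟨h - 1, by omega⟩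
    rw [hWp (m+1) (by omega), hWp (m+1+1) (by omega), hrec (m+1) (by omega)]
    have hIcc : ∑ j ∈ Finset.Icc 1 (m + 1 + 1 - 1), f j
        = (∑ j ∈ Finset.Icc 1 (m + 1 - 1), f j) + f (m+1) := by
      have : m + 1 + 1 - 1 = m + 1 := by omega
      rw [this]
      have : m + 1 - 1 = m := by omega
      rw [this]
      exact Finset.sum_Icc_succ_top (by omega) f
    rw [hIcc]
    set A := ∑' k : ℕ, f (m + 1 + 1 + k) * (1 - p) ^ k with hA
    have key : f (m+1) ≤ p * A := hge (m+1) (by omega)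
    push_cast
    nlinarith [mul_nonneg (mul_nonneg hp0.le hp0.le) (mul_nonneg (Nat.cast_nonneg m : (0:ℝ) ≤ m) (sub_nonneg.mpr key)), mul_nonneg hp0.le (sub_nonneg.mpr key)]
  refine ⟨hW1, hWmono, ?_, ?_⟩
  · intro C hC _ H hH
    obtain ⟨⟨hH1, hHC⟩, hlb⟩ := hH
    refine ⟨?_, hHC⟩
    rcases Nat.lt_or_ge H 2 with h2 | h2
    · have : H = 1 := by omega
      rw [this, hW1]; exact hC.le
    · obtain ⟨m, rfl⟩ : ∃ m, H = m + 1 := ⟨H - 1, by omega⟩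
      by_contra hcon
      push_neg at hcon
      have hmem : m ∈ {H' : ℕ | 1 ≤ H' ∧ C ≤ Wp (H' + 1)} := ⟨by omega, hcon.le⟩
      have := hlb hmem
      omega
  · intro C₁ C₂ H₁ H₂ hC1 hC12 h1 h2
    exact h1.2 ⟨h2.1.1, le_trans hC12 h2.1.2⟩
end

section
/- Let w > 0, 0 < p < 1, and let A be a positive integer. Then the unreliable-channel Whittle index of the linear cost function f(x) = w·x evaluates in closed form: p²·A·Σ_{k=1}^{∞} w·(k+A)·(1−p)^{k−1} − p·Σ_{j=1}^{A} w·j = (w·p·A/2)·(A + (1 + (1−p))/(1 − (1−p))) = (w·p·A/2)·(A + (2−p)/p). -/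
/-- Closed form of the unreliable-channel Whittle index for the linear
cost function `f x = w·x`:
`p²·A·Σ_{k=1}^∞ w(k+A)(1−p)^{k−1} − p·Σ_{j=1}^A w·j
  = (w·p·A/2)·(A + (1+(1−p))/(1−(1−p))) = (w·p·A/2)·(A + (2−p)/p)`. -/
theorem stmt18 (w p : ℝ) (hw : 0 < w) (hp0 : 0 < p) (hp1 : p < 1)
    (A : ℕ) (hA : 1 ≤ A) :
    p ^ 2 * (A : ℝ) * (∑' k : ℕ, w * ((k : ℝ) + 1 + (A : ℝ)) * (1 - p) ^ k)
        - p * ∑ j ∈ Finset.Icc 1 A, w * (j : ℝ) =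
      w * p * (A : ℝ) / 2 * ((A : ℝ) + (1 + (1 - p)) / (1 - (1 - p))) ∧
    w * p * (A : ℝ) / 2 * ((A : ℝ) + (1 + (1 - p)) / (1 - (1 - p))) =
      w * p * (A : ℝ) / 2 * ((A : ℝ) + (2 - p) / p) := by
  have hr : ‖(1 - p)‖ < 1 := by
    rw [Real.norm_eq_abs, abs_lt]; constructor <;> linarith
  have h1 : ∑' k : ℕ, (k : ℝ) * (1 - p) ^ k = (1 - p) / (1 - (1 - p)) ^ 2 :=
    tsum_coe_mul_geometric_of_norm_lt_one hr
  have h2 : ∑' k : ℕ, (1 - p) ^ k = (1 - (1 - p))⁻¹ :=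
    tsum_geometric_of_norm_lt_one hr
  have hs1 : Summable (fun k : ℕ => (k : ℝ) * (1 - p) ^ k) :=
    (summable_pow_mul_geometric_of_norm_lt_one 1 hr).congr (by intro k; rw [pow_one])
  have hs2 : Summable (fun k : ℕ => (1 - p) ^ k) := summable_geometric_of_norm_lt_one hr
  have hsum : ∑' k : ℕ, w * ((k : ℝ) + 1 + (A : ℝ)) * (1 - p) ^ k
      = w * ((1 - p) / (1 - (1 - p)) ^ 2 + (1 + (A : ℝ)) * (1 - (1 - p))⁻¹) := by
    have : (fun k : ℕ => w * ((k : ℝ) + 1 + (A : ℝ)) * (1 - p) ^ k)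
        = fun k : ℕ => w * ((k : ℝ) * (1 - p) ^ k) + (w * (1 + (A : ℝ))) * (1 - p) ^ k := by
      funext k; ring
    rw [this, Summable.tsum_add (hs1.mul_left w) (hs2.mul_left _), tsum_mul_left, tsum_mul_left,
      h1, h2]
    ring
  have hIcc : ∑ j ∈ Finset.Icc 1 A, w * (j : ℝ) = w * (A * (A + 1) / 2) := by
    rw [← Finset.mul_sum]
    congr 1
    clear hsum hA
    induction A with
    | zero => simp
    | succ n ih =>
      rw [Finset.sum_Icc_succ_top (by omega)]
      rw [ih]
      push_cast; ring
  rw [hsum, hIcc]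
  have hp : 1 - (1 - p) = p := by ring
  rw [hp]
  constructor
  · field_simp
    ring
  · have h : (1:ℝ) + (1 - p) = 2 - p := by ring
    rw [h]
end

section
/- Let 0 < p ≤ 1, let f : ℤ⁺ → ℝ be a nonnegative, nondecreasing cost function with Σ_{h=1}^{∞} f(h)(1−p)^h < ∞, and let C > 0. Suppose that for every h ≥ 1, p²·h·Σ_{k=1}^{∞} f(k+h)(1−p)^{k−1} − p·Σ_{j=1}^{h} f(j) < C. Then: (i) f is bounded, so λ := lim_{h→∞} f(h) = sup_h f(h) exists and is finite; (ii) Σ_{j=1}^{∞} (λ − f(j)) ≤ C/p (in particular this series of nonnegative terms converges); and (iii) the function S(h) := C − Σ_{j=h}^{∞} (λ − f(j)) satisfies S(h) = f(h) − λ + S(h+1) and S(h) ≤ C for every h ≥ 1, so S solves the Bellman equation S(h) = f(h) − λ + min{C + (1−p)·S(h+1), S(h+1)} with the minimum always attained by S(h+1), i.e., the never-activate policy is optimal with average cost λ. -/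
/-- Unreliable-channel never-activate case. If the Whittle index
`p²·h·Σ_{k=1}^∞ f(k+h)(1−p)^{k−1} − p·Σ_{j=1}^h f(j)` is `< C` for every `h ≥ 1`, then
`f` converges to a finite limit `λ = sup f`, `Σ_{j=1}^∞ (λ − f(j)) ≤ C/p` (the series of
nonnegative terms converges), and `S h := C − Σ_{j=h}^∞ (λ − f(j))` satisfies
`S h = f h − λ + S (h+1)` and `S h ≤ C`, hence solves the Bellman equation
`S h = f h − λ + min {C + (1−p)·S (h+1), S (h+1)}` with the minimum always attained by
`S (h+1)` (never-activate is optimal with average cost λ). -/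
theorem stmt19 (p : ℝ) (hp0 : 0 < p) (hp1 : p ≤ 1)
    (f : ℕ → ℝ)
    (hpos : ∀ h, 1 ≤ h → 0 ≤ f h)
    (hmono : ∀ h, 1 ≤ h → f h ≤ f (h + 1))
    (hbc : Summable (fun h : ℕ => f (h + 1) * (1 - p) ^ (h + 1)))
    (C : ℝ) (hC : 0 < C)
    (hlt : ∀ h : ℕ, 1 ≤ h →
      p ^ 2 * (h : ℝ) * (∑' k : ℕ, f (k + 1 + h) * (1 - p) ^ k)
        - p * ∑ j ∈ Finset.Icc 1 h, f j < C) :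
    ∃ lam : ℝ,
      Filter.Tendsto (fun h => f h) Filter.atTop (nhds lam) ∧
      (∀ h, 1 ≤ h → f h ≤ lam) ∧
      Summable (fun j : ℕ => lam - f (j + 1)) ∧
      (∑' j : ℕ, (lam - f (j + 1))) ≤ C / p ∧
      (∀ h, 1 ≤ h →
        (C - ∑' j : ℕ, (lam - f (h + j))) =
          f h - lam + (C - ∑' j : ℕ, (lam - f (h + 1 + j))) ∧
        (C - ∑' j : ℕ, (lam - f (h + j))) ≤ C ∧
        (C - ∑' j : ℕ, (lam - f (h + j))) =
          f h - lam +
            min (C + (1 - p) * (C - ∑' j : ℕ, (lam - f (h + 1 + j))))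
              (C - ∑' j : ℕ, (lam - f (h + 1 + j)))) := by
  have hq0 : (0:ℝ) ≤ 1 - p := by linarith
  have hq1 : (1:ℝ) - p < 1 := by linarith
  -- extended monotonicity
  have hm : ∀ a b : ℕ, 1 ≤ a → a ≤ b → f a ≤ f b := by
    intro a b ha hab
    obtain ⟨k, rfl⟩ := Nat.exists_eq_add_of_le hab
    clear hab
    induction k with
    | zero => exact le_rfl
    | succ n ih => exact ih.trans (hmono (a + n) (by omega))
  -- key inequality from the Whittle index bound
  have key : ∀ h : ℕ, 1 ≤ h → ∑ j ∈ Finset.Icc 1 h, (f (h + 1) - f j) ≤ C / p := by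
    intro h hh
    have hg : Summable (fun k : ℕ => f (k + 1 + h) * (1 - p) ^ k) := by
      by_cases hp : p = 1
      · apply summable_of_ne_finset_zero (s := {0})
        intro k hk
        have hk0 : k ≠ 0 := by simpa using hk
        have hz : (1 : ℝ) - p = 0 := by rw [hp]; ring
        rw [hz, zero_pow hk0, mul_zero]
      · have hq0' : 0 < 1 - p := by
          rcases lt_or_eq_of_le hq0 with h' | h'
          · exact h'
          · exact absurd (by linarith : p = 1) hp
        have hne : ((1 : ℝ) - p) ^ (h + 1) ≠ 0 := pow_ne_zero _ (ne_of_gt hq0')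
        have h1 : Summable (fun n : ℕ => f (n + h + 1) * (1 - p) ^ (n + h + 1)) :=
          (summable_nat_add_iff (f := fun n : ℕ => f (n + 1) * (1 - p) ^ (n + 1)) h).mpr hbc
        have h2 := h1.mul_right (((1 - p) ^ (h + 1))⁻¹)
        apply h2.congr
        intro k
        have hinv : ((1 : ℝ) - p) ^ (h + 1) * (((1 : ℝ) - p) ^ (h + 1))⁻¹ = 1 :=
          mul_inv_cancel₀ hne
        rw [show k + h + 1 = k + (h + 1) from by omega, pow_add,
          show k + (h + 1) = k + 1 + h from by omega]
        calc f (k + 1 + h) * ((1 - p) ^ k * (1 - p) ^ (h + 1)) * ((1 - p) ^ (h + 1))⁻¹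
            = f (k + 1 + h) * (1 - p) ^ k * ((1 - p) ^ (h + 1) * ((1 - p) ^ (h + 1))⁻¹) := by
              ring
          _ = f (k + 1 + h) * (1 - p) ^ k := by rw [hinv, mul_one]
    have hfh1 : 0 ≤ f (h + 1) := hpos (h + 1) (by omega)
    have hgeo : Summable (fun k : ℕ => f (h + 1) * (1 - p) ^ k) :=
      (summable_geometric_of_lt_one hq0 hq1).mul_left _
    have hlb : f (h + 1) / p ≤ ∑' k : ℕ, f (k + 1 + h) * (1 - p) ^ k := by
      have heq : (∑' k : ℕ, f (h + 1) * (1 - p) ^ k) = f (h + 1) / p := by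
        rw [tsum_mul_left, tsum_geometric_of_lt_one hq0 hq1]
        have : 1 - (1 - p) = p := by ring
        rw [this, div_eq_mul_inv]
      rw [← heq]
      refine Summable.tsum_le_tsum (fun k => ?_) hgeo hg
      exact mul_le_mul_of_nonneg_right (hm (h + 1) (k + 1 + h) (by omega) (by omega))
        (pow_nonneg hq0 k)
    have H := hlt h hh
    have hT : p ^ 2 * (h : ℝ) * (f (h + 1) / p) ≤
        p ^ 2 * (h : ℝ) * (∑' k : ℕ, f (k + 1 + h) * (1 - p) ^ k) := by
      apply mul_le_mul_of_nonneg_left hlb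
      positivity
    have hsum_card : ∑ j ∈ Finset.Icc 1 h, (f (h + 1) - f j)
        = (h : ℝ) * f (h + 1) - ∑ j ∈ Finset.Icc 1 h, f j := by
      rw [Finset.sum_sub_distrib, Finset.sum_const, Nat.card_Icc]
      simp
    rw [hsum_card, le_div_iff₀ hp0]
    have hps : p ^ 2 * (h : ℝ) * (f (h + 1) / p) = p * ((h : ℝ) * f (h + 1)) := by
      field_simp
    nlinarith [hT, H]
  -- boundedness
  have hCp : 0 < C / p := div_pos hC hp0
  have hbdd : ∀ h : ℕ, 1 ≤ h → f h ≤ f 1 + C / p := by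
    intro h hh
    rcases eq_or_lt_of_le hh with h1 | h1
    · rw [← h1]; linarith
    · have h2 : 1 ≤ h - 1 := by omega
      have hk := key (h - 1) h2
      have hmem : (1 : ℕ) ∈ Finset.Icc 1 (h - 1) := by
        simp [Finset.mem_Icc]; omega
      have hone : f (h - 1 + 1) - f 1 ≤ ∑ j ∈ Finset.Icc 1 (h - 1), (f (h - 1 + 1) - f j) := by
        apply Finset.single_le_sum (f := fun j => f (h - 1 + 1) - f j) ?_ hmem
        intro j hj
        simp only [Finset.mem_Icc] at hj
        have := hm j (h - 1 + 1) hj.1 (by omega)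
        linarith
      have heq : h - 1 + 1 = h := by omega
      rw [heq] at hone hk
      linarith
  -- the limit
  have hgmono : Monotone (fun n : ℕ => f (n + 1)) :=
    monotone_nat_of_le_succ (fun n => hmono (n + 1) (by omega))
  have hgbdd : BddAbove (Set.range (fun n : ℕ => f (n + 1))) := by
    refine ⟨f 1 + C / p, ?_⟩
    rintro x ⟨n, rfl⟩
    exact hbdd (n + 1) (by omega)
  set lam := ⨆ n : ℕ, f (n + 1) with hlam
  have htend_g : Filter.Tendsto (fun n : ℕ => f (n + 1)) Filter.atTop (nhds lam) :=
    tendsto_atTop_ciSup hgmono hgbdd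
  have hle_lam : ∀ h : ℕ, 1 ≤ h → f h ≤ lam := by
    intro h hh
    have := le_ciSup hgbdd (h - 1)
    have heq : h - 1 + 1 = h := by omega
    rw [heq] at this
    exact this
  -- partial sum bound
  have hpartial : ∀ N : ℕ, ∑ j ∈ Finset.range N, (lam - f (j + 1)) ≤ C / p := by
    intro N
    have hN : Filter.Tendsto (fun h : ℕ => ∑ j ∈ Finset.range N, (f (h + 1) - f (j + 1)))
        Filter.atTop (nhds (∑ j ∈ Finset.range N, (lam - f (j + 1)))) := by
      apply tendsto_finset_sum
      intro j _
      exact htend_g.sub tendsto_const_nhds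
    refine le_of_tendsto hN ?_
    filter_upwards [Filter.eventually_ge_atTop (max N 1)] with h hh
    have hh1 : 1 ≤ h := le_trans (le_max_right N 1) hh
    have hhN : N ≤ h := le_trans (le_max_left N 1) hh
    have e1 : ∑ j ∈ Finset.range N, (f (h + 1) - f (j + 1))
        = ∑ j ∈ Finset.Icc 1 N, (f (h + 1) - f j) := by
      rw [← Finset.Ico_add_one_right_eq_Icc, Finset.sum_Ico_eq_sum_range]
      simp [add_comm]
    rw [e1]
    calc ∑ j ∈ Finset.Icc 1 N, (f (h + 1) - f j)
        ≤ ∑ j ∈ Finset.Icc 1 h, (f (h + 1) - f j) := by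
          apply Finset.sum_le_sum_of_subset_of_nonneg
          · exact Finset.Icc_subset_Icc_right hhN
          · intro j hj _
            simp only [Finset.mem_Icc] at hj
            have := hm j (h + 1) hj.1 (by omega)
            linarith
      _ ≤ C / p := key h hh1
  have hterm_nonneg : ∀ j : ℕ, 0 ≤ lam - f (j + 1) := by
    intro j
    have := hle_lam (j + 1) (by omega)
    linarith
  have hsum : Summable (fun j : ℕ => lam - f (j + 1)) :=
    summable_of_sum_range_le hterm_nonneg hpartial
  -- tail summability
  have hsum_tail : ∀ m : ℕ, 1 ≤ m → Summable (fun j : ℕ => lam - f (m + j)) := by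
    intro m hm1
    have h1 : Summable (fun j : ℕ => lam - f (j + (m - 1) + 1)) :=
      (summable_nat_add_iff (f := fun j : ℕ => lam - f (j + 1)) (m - 1)).mpr hsum
    apply h1.congr
    intro j
    congr 2
    omega
  refine ⟨lam, ?_, hle_lam, hsum, Summable.tsum_le_of_sum_range_le hsum hpartial, ?_⟩
  · exact (Filter.tendsto_add_atTop_iff_nat 1).mp htend_g
  · intro h hh
    have hS1 : Summable (fun j : ℕ => lam - f (h + j)) := hsum_tail h hh
    have hS2 : Summable (fun j : ℕ => lam - f (h + 1 + j)) := hsum_tail (h + 1) (by omega)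
    have hrec : (∑' j : ℕ, (lam - f (h + j)))
        = (lam - f h) + ∑' j : ℕ, (lam - f (h + 1 + j)) := by
      rw [Summable.tsum_eq_zero_add hS1]
      have he : (∑' j : ℕ, (lam - f (h + (j + 1)))) = ∑' j : ℕ, (lam - f (h + 1 + j)) :=
        tsum_congr (fun j => by congr 2; omega)
      rw [he, Nat.add_zero]
    have hT2nonneg : 0 ≤ ∑' j : ℕ, (lam - f (h + 1 + j)) := by
      apply tsum_nonneg
      intro j
      have := hle_lam (h + 1 + j) (by omega)
      linarith
    have hT1nonneg : 0 ≤ ∑' j : ℕ, (lam - f (h + j)) := by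
      apply tsum_nonneg
      intro j
      have := hle_lam (h + j) (by omega)
      linarith
    refine ⟨by rw [hrec]; ring, by linarith, ?_⟩
    have hSC : C - ∑' j : ℕ, (lam - f (h + 1 + j)) ≤ C := by linarith
    have hmin : min (C + (1 - p) * (C - ∑' j : ℕ, (lam - f (h + 1 + j))))
        (C - ∑' j : ℕ, (lam - f (h + 1 + j)))
        = C - ∑' j : ℕ, (lam - f (h + 1 + j)) := by
      apply min_eq_right
      set S' := C - ∑' j : ℕ, (lam - f (h + 1 + j)) with hS'
      have hpS' : p * S' ≤ C := by
        have := mul_le_mul_of_nonneg_left hSC hp0.le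
        nlinarith
      nlinarith
    rw [hmin, hrec]
    ring
end
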